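/- There exist 72 unit vectors v_1, …, v_72 in R^24, pairwise satisfying |⟨v_i, v_j⟩| = 1/5 for i ≠ j, such that every v_i is orthogonal to each of the five vectors e_1 − e_2, e_1 − e_3, c = 4e_1 + Σ_{i=1}^{24} e_i, c_1 = e_2 + e_3 + e_10 + e_12 + e_13 + e_14 + e_21 + e_24, and c_2 = e_2 + e_3 + e_6 + e_7 + e_18 + e_19 + e_22 + e_23. In particular, these 72 vectors lie in a 19-dimensional subspace of R^24 and form 72 equiangular lines in R^19 with angle arccos(1/5). -/

import Mathlib

/-- The standard basis vector `e_i` of `ℝ^24` (0-indexed). -/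
noncomputable def stdBasisR24 (i : Fin 24) : EuclideanSpace ℝ (Fin 24) :=
  EuclideanSpace.single i 1

/-- The vector `c = 4 e₁ + ∑_{i=1}^{24} e_i`. -/
noncomputable def cVec : EuclideanSpace ℝ (Fin 24) :=
  (4 : ℝ) • stdBasisR24 0 + ∑ i, stdBasisR24 i

/-- The vector `c₁ = e₂ + e₃ + e₁₀ + e₁₂ + e₁₃ + e₁₄ + e₂₁ + e₂₄`. -/
noncomputable def c1Vec : EuclideanSpace ℝ (Fin 24) :=
  stdBasisR24 1 + stdBasisR24 2 + stdBasisR24 9 + stdBasisR24 11 +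
    stdBasisR24 12 + stdBasisR24 13 + stdBasisR24 20 + stdBasisR24 23

/-- The vector `c₂ = e₂ + e₃ + e₆ + e₇ + e₁₈ + e₁₉ + e₂₂ + e₂₃`. -/
noncomputable def c2Vec : EuclideanSpace ℝ (Fin 24) :=
  stdBasisR24 1 + stdBasisR24 2 + stdBasisR24 5 + stdBasisR24 6 +
    stdBasisR24 17 + stdBasisR24 18 + stdBasisR24 21 + stdBasisR24 22


namespace Equi72

def Umat : Matrix (Fin 72) (Fin 24) ℤ :=
    !![-1, -1, -1, -1, 3, 3, -1, 3, 3, 3, -1, -1, -1, -1, -1, -1, -1, -1, -1, -1, -1, 3, -1, 3;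
    -1, -1, -1, -1, -1, -1, -1, -1, 3, 3, -1, -1, -1, 3, 3, -1, -1, -1, -1, 3, -1, 3, 3, -1;
    -1, -1, -1, 3, -1, 3, 3, -1, -1, -1, 3, 3, 3, -1, 3, -1, -1, -1, -1, -1, -1, -1, -1, -1;
    -1, -1, -1, 3, 3, -1, 3, 3, -1, 3, -1, -1, 3, -1, -1, -1, -1, -1, 3, -1, -1, -1, -1, -1;
    -1, -1, -1, 3, -1, -1, -1, -1, -1, 3, -1, -1, 3, -1, 3, 3, -1, 3, -1, -1, -1, -1, 3, -1;
    -1, -1, -1, -1, -1, 3, 3, -1, 3, -1, -1, 3, -1, -1, -1, 3, 3, -1, -1, -1, -1, -1, -1, 3;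
    -1, -1, -1, -1, -1, -1, 3, 3, -1, -1, -1, 3, -1, -1, 3, -1, 3, -1, 3, -1, 3, -1, -1, -1;
    -1, -1, -1, -1, 3, 3, -1, 3, -1, -1, -1, -1, 3, -1, 3, -1, -1, 3, -1, -1, 3, -1, -1, -1;
    -1, -1, -1, -1, 3, 3, -1, -1, -1, -1, -1, 3, -1, 3, 3, -1, 3, -1, -1, -1, -1, 3, -1, -1;
    -1, -1, -1, -1, 3, -1, 3, -1, -1, -1, 3, 3, -1, 3, -1, 3, -1, -1, 3, -1, -1, -1, -1, -1;
    -1, -1, -1, -1, -1, -1, 3, 3, -1, -1, -1, 3, 3, -1, -1, 3, -1, 3, -1, 3, -1, -1, -1, -1;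
    -1, -1, -1, -1, -1, -1, -1, -1, -1, -1, 3, -1, 3, -1, 3, -1, 3, -1, -1, -1, 3, 3, 3, -1;
    -1, -1, -1, -1, -1, 3, -1, 3, -1, 3, 3, -1, 3, -1, -1, -1, -1, -1, -1, 3, -1, -1, 3, -1;
    -1, -1, -1, -1, -1, 3, -1, 3, -1, -1, 3, 3, -1, -1, -1, 3, -1, -1, -1, -1, 3, 3, -1, -1;
    -1, -1, -1, 3, -1, 3, -1, -1, 3, -1, -1, -1, -1, 3, 3, -1, -1, 3, -1, -1, -1, -1, -1, 3;
    -1, -1, -1, -1, 3, -1, -1, -1, 3, -1, 3, -1, -1, 3, -1, -1, -1, 3, -1, -1, 3, 3, -1, -1;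
    -1, -1, -1, 3, -1, -1, -1, -1, 3, -1, 3, -1, 3, 3, -1, -1, -1, -1, 3, -1, -1, -1, 3, -1;
    -1, -1, -1, -1, 3, 3, -1, -1, -1, -1, 3, 3, -1, -1, -1, -1, -1, 3, -1, 3, -1, -1, -1, 3;
    -1, -1, -1, 3, -1, -1, -1, -1, -1, -1, -1, 3, 3, -1, -1, 3, 3, -1, 3, -1, -1, 3, -1, -1;
    -1, -1, -1, -1, -1, 3, -1, -1, -1, -1, -1, -1, 3, -1, 3, 3, -1, -1, -1, 3, -1, 3, -1, 3;
    -1, -1, -1, 3, -1, -1, -1, -1, 3, -1, -1, -1, -1, -1, -1, 3, -1, -1, -1, -1, 3, 3, 3, 3;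
    -1, -1, -1, 3, 3, -1, 3, -1, -1, -1, -1, -1, -1, 3, 3, -1, -1, -1, -1, -1, 3, -1, 3, -1;
    -1, -1, -1, -1, -1, -1, -1, -1, 3, -1, -1, 3, -1, 3, -1, -1, 3, 3, 3, 3, -1, -1, -1, -1;
    -1, -1, -1, -1, -1, 3, 3, 3, -1, 3, -1, -1, -1, 3, 3, 3, -1, -1, -1, -1, -1, -1, -1, -1;
    -1, -1, -1, -1, 3, -1, -1, -1, 3, -1, -1, -1, 3, -1, -1, 3, -1, 3, 3, -1, -1, -1, -1, 3;
    -1, -1, -1, -1, -1, -1, 3, -1, 3, 3, 3, -1, 3, -1, -1, 3, -1, -1, -1, -1, -1, 3, -1, -1;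
    -1, -1, -1, -1, -1, -1, 3, 3, 3, -1, -1, -1, 3, -1, 3, -1, -1, -1, -1, -1, -1, -1, 3, 3;
    -1, -1, -1, -1, -1, -1, -1, -1, 3, 3, 3, -1, -1, -1, -1, -1, 3, 3, -1, -1, -1, -1, 3, 3;
    -1, -1, -1, 3, 3, -1, -1, -1, -1, -1, -1, -1, -1, 3, -1, -1, -1, -1, 3, 3, -1, 3, -1, 3;
    -1, -1, -1, -1, 3, -1, -1, -1, -1, -1, -1, 3, 3, -1, 3, -1, -1, -1, 3, 3, -1, -1, 3, -1;
    -1, -1, -1, 3, -1, -1, 3, -1, 3, -1, -1, -1, 3, -1, -1, -1, 3, 3, -1, -1, 3, -1, -1, -1;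
    -1, -1, -1, -1, -1, -1, -1, 3, -1, 3, -1, -1, -1, -1, 3, -1, -1, 3, 3, 3, -1, -1, -1, 3;
    -1, -1, -1, -1, -1, -1, -1, 3, -1, -1, 3, 3, -1, 3, 3, -1, -1, 3, -1, -1, -1, -1, 3, -1;
    -1, -1, -1, -1, -1, -1, -1, 3, -1, -1, -1, 3, -1, -1, -1, -1, 3, -1, -1, 3, -1, 3, 3, 3;
    -1, -1, -1, 3, 3, 3, -1, -1, 3, -1, -1, 3, -1, -1, -1, -1, -1, -1, 3, -1, 3, -1, -1, -1;
    -1, -1, -1, 3, -1, -1, -1, 3, -1, -1, -1, -1, -1, 3, -1, 3, -1, 3, 3, -1, 3, -1, -1, -1;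
    -1, -1, -1, -1, -1, -1, -1, -1, 3, -1, 3, 3, -1, -1, 3, -1, -1, -1, 3, -1, -1, 3, -1, 3;
    -1, -1, -1, -1, -1, -1, -1, 3, 3, -1, -1, -1, 3, -1, -1, -1, -1, -1, 3, 3, 3, 3, -1, -1;
    -1, -1, -1, -1, 3, -1, -1, -1, -1, -1, -1, 3, -1, -1, -1, 3, 3, 3, -1, -1, 3, -1, 3, -1;
    -1, -1, -1, -1, -1, -1, 3, -1, -1, -1, -1, -1, -1, 3, -1, 3, 3, -1, -1, 3, 3, 3, -1, -1;
    -1, -1, -1, -1, 3, 3, 3, -1, 3, -1, -1, -1, 3, 3, -1, -1, -1, -1, -1, 3, -1, -1, -1, -1;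
    -1, -1, -1, -1, -1, 3, -1, -1, 3, 3, -1, -1, 3, -1, 3, -1, 3, -1, 3, -1, -1, -1, -1, -1;
    -1, -1, -1, 3, -1, -1, 3, 3, 3, -1, -1, 3, -1, 3, -1, -1, -1, -1, -1, -1, -1, 3, -1, -1;
    -1, -1, -1, 3, -1, 3, -1, -1, -1, 3, 3, -1, -1, -1, -1, 3, -1, -1, 3, -1, -1, -1, -1, 3;
    -1, -1, -1, 3, 3, 3, -1, -1, -1, -1, -1, -1, 3, -1, -1, -1, 3, -1, -1, -1, -1, -1, 3, 3;
    -1, -1, -1, -1, -1, 3, -1, 3, 3, -1, -1, -1, -1, 3, -1, -1, 3, -1, -1, -1, 3, -1, 3, -1;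
    -1, -1, -1, -1, 3, -1, -1, 3, -1, -1, -1, -1, 3, 3, -1, 3, -1, -1, -1, -1, -1, 3, 3, -1;
    -1, -1, -1, -1, -1, -1, -1, 3, -1, 3, 3, -1, -1, 3, -1, -1, 3, -1, 3, -1, -1, 3, -1, -1;
    -1, -1, -1, 3, -1, -1, -1, -1, -1, 3, -1, -1, -1, -1, -1, -1, 3, -1, 3, 3, 3, -1, 3, -1;
    -1, -1, -1, -1, 3, -1, -1, -1, -1, 3, -1, -1, 3, -1, -1, -1, 3, 3, -1, 3, -1, 3, -1, -1;
    -1, -1, -1, -1, -1, 3, -1, -1, -1, -1, 3, -1, 3, 3, -1, 3, 3, 3, -1, -1, -1, -1, -1, -1;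
    -1, -1, -1, -1, 3, -1, 3, -1, 3, 3, -1, 3, -1, -1, 3, -1, -1, 3, -1, -1, -1, -1, -1, -1;
    -1, -1, -1, -1, -1, -1, 3, -1, -1, -1, 3, -1, -1, -1, 3, 3, -1, 3, -1, -1, 3, -1, -1, 3;
    -1, -1, -1, 3, -1, -1, 3, -1, -1, 3, -1, -1, -1, -1, 3, -1, 3, -1, -1, -1, -1, 3, -1, 3;
    -1, -1, -1, -1, 3, -1, 3, -1, -1, 3, -1, -1, -1, -1, -1, 3, -1, -1, -1, 3, -1, -1, 3, 3;
    -1, -1, -1, -1, 3, -1, 3, 3, -1, -1, -1, -1, -1, 3, -1, -1, 3, 3, -1, -1, -1, -1, -1, 3;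
    -1, -1, -1, -1, -1, 3, -1, -1, -1, -1, 3, -1, -1, 3, 3, -1, -1, -1, 3, 3, 3, -1, -1, -1;
    -1, -1, -1, 3, -1, -1, -1, 3, -1, -1, 3, -1, 3, -1, -1, -1, -1, 3, -1, -1, -1, 3, -1, 3;
    -1, -1, -1, 3, -1, -1, 3, -1, -1, 3, 3, -1, -1, 3, -1, -1, -1, 3, -1, 3, -1, -1, -1, -1;
    -1, -1, -1, -1, 3, -1, -1, 3, -1, -1, 3, -1, -1, -1, -1, -1, -1, -1, 3, -1, 3, -1, 3, 3;
    -1, -1, -1, -1, -1, -1, 3, -1, -1, -1, 3, -1, 3, -1, -1, -1, 3, -1, 3, 3, -1, -1, -1, 3;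
    -1, -1, -1, -1, 3, 3, 3, -1, -1, 3, 3, -1, -1, -1, -1, -1, 3, -1, -1, -1, 3, -1, -1, -1;
    -1, -1, -1, 3, -1, 3, 3, 3, -1, -1, -1, -1, -1, -1, -1, -1, -1, -1, -1, 3, 3, -1, -1, 3;
    -1, -1, -1, -1, -1, -1, -1, 3, 3, 3, -1, 3, -1, -1, -1, 3, -1, -1, 3, -1, -1, -1, 3, -1;
    -1, -1, -1, 3, -1, 3, -1, 3, -1, 3, -1, 3, -1, -1, -1, -1, 3, 3, -1, -1, -1, -1, -1, -1;
    -1, -1, -1, -1, -1, -1, 3, -1, 3, -1, 3, 3, -1, -1, -1, -1, -1, -1, -1, 3, 3, -1, 3, -1;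
    -1, -1, -1, -1, -1, 3, -1, -1, 3, 3, -1, -1, -1, -1, -1, 3, -1, 3, -1, 3, 3, -1, -1, -1;
    -1, -1, -1, 3, -1, 3, -1, -1, -1, -1, -1, 3, -1, 3, -1, 3, -1, -1, -1, 3, -1, -1, 3, -1;
    -1, -1, -1, -1, 3, -1, -1, -1, -1, 3, -1, -1, -1, -1, 3, 3, -1, -1, 3, -1, 3, 3, -1, -1;
    -1, -1, -1, 3, -1, -1, -1, -1, -1, -1, -1, 3, -1, -1, 3, -1, -1, 3, -1, 3, 3, 3, -1, -1;
    -1, -1, -1, 3, 3, -1, -1, -1, -1, 3, 3, 3, -1, -1, -1, -1, -1, -1, -1, -1, -1, 3, 3, -1;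
    -1, -1, -1, -1, -1, -1, -1, -1, -1, -1, -1, -1, -1, 3, 3, 3, 3, -1, 3, -1, -1, -1, 3, 3]

def dotZ (i k : Fin 72) : ℤ := ∑ j, Umat i j * Umat k j

lemma dotZ_comm (i k : Fin 72) : dotZ i k = dotZ k i :=
  Finset.sum_congr rfl fun j _ => mul_comm _ _

set_option maxRecDepth 100000 in
set_option maxHeartbeats 8000000 in
lemma dotZ_lt (i k : Fin 72) (h : i < k) : dotZ i k = 16 ∨ dotZ i k = -16 := by
  revert i k h; decide

lemma dotZ_pm (i k : Fin 72) (h : i ≠ k) : dotZ i k = 16 ∨ dotZ i k = -16 := by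
  rcases lt_or_gt_of_ne h with h' | h'
  · exact dotZ_lt i k h'
  · rw [dotZ_comm]; exact dotZ_lt k i h'

set_option maxRecDepth 8000 in
lemma dotZ_diag (i : Fin 72) : dotZ i i = 80 := by revert i; decide

set_option maxRecDepth 8000 in
lemma U01 (i : Fin 72) : Umat i 0 = Umat i 1 := by revert i; decide

set_option maxRecDepth 8000 in
lemma U02 (i : Fin 72) : Umat i 0 = Umat i 2 := by revert i; decide

set_option maxRecDepth 8000 in
lemma Uc (i : Fin 72) : 4 * Umat i 0 + ∑ j, Umat i j = 0 := by revert i; decide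

set_option maxRecDepth 8000 in
lemma Uc1 (i : Fin 72) :
    Umat i 1 + Umat i 2 + Umat i 9 + Umat i 11 + Umat i 12 + Umat i 13 +
      Umat i 20 + Umat i 23 = 0 := by revert i; decide

set_option maxRecDepth 8000 in
lemma Uc2 (i : Fin 72) :
    Umat i 1 + Umat i 2 + Umat i 5 + Umat i 6 + Umat i 17 + Umat i 18 +
      Umat i 21 + Umat i 22 = 0 := by revert i; decide

noncomputable def vv (i : Fin 72) : EuclideanSpace ℝ (Fin 24) :=
  (Real.sqrt 80)⁻¹ • (WithLp.equiv 2 (Fin 24 → ℝ)).symm (fun j => (Umat i j : ℝ))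

lemma vv_apply (i : Fin 72) (j : Fin 24) :
    vv i j = (Real.sqrt 80)⁻¹ * (Umat i j : ℝ) := by
  simp [vv, WithLp.equiv_symm_apply, PiLp.toLp_apply]

lemma sqrt80_sq : (Real.sqrt 80)⁻¹ * (Real.sqrt 80)⁻¹ = (80 : ℝ)⁻¹ := by
  rw [← mul_inv, Real.mul_self_sqrt (by norm_num)]

lemma inner_vv (i k : Fin 72) :
    (inner ℝ (vv i) (vv k) : ℝ) = (80 : ℝ)⁻¹ * ((dotZ i k : ℤ) : ℝ) := by
  simp only [PiLp.inner_apply, RCLike.inner_apply, conj_trivial, vv_apply, dotZ]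
  push_cast
  rw [Finset.mul_sum]
  exact Finset.sum_congr rfl fun j _ => by rw [mul_mul_mul_comm, sqrt80_sq, mul_comm (Umat k j : ℝ)]

lemma norm_vv (i : Fin 72) : ‖vv i‖ = 1 := by
  have h : (inner ℝ (vv i) (vv i) : ℝ) = 1 := by
    rw [inner_vv, dotZ_diag]; norm_num
  have h2 := real_inner_self_eq_norm_mul_norm (vv i)
  nlinarith [norm_nonneg (vv i)]

lemma inner_vv_single (i : Fin 72) (a : Fin 24) :
    (inner ℝ (vv i) (stdBasisR24 a) : ℝ) = (Real.sqrt 80)⁻¹ * (Umat i a : ℝ) := by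
  rw [stdBasisR24, EuclideanSpace.inner_single_right]
  simp [vv_apply]

lemma ortho1 (i : Fin 72) : (inner ℝ (vv i) (stdBasisR24 0 - stdBasisR24 1) : ℝ) = 0 := by
  rw [inner_sub_right, inner_vv_single, inner_vv_single, U01, sub_self]

lemma ortho2 (i : Fin 72) : (inner ℝ (vv i) (stdBasisR24 0 - stdBasisR24 2) : ℝ) = 0 := by
  rw [inner_sub_right, inner_vv_single, inner_vv_single, U02, sub_self]

lemma orthoc (i : Fin 72) : (inner ℝ (vv i) cVec : ℝ) = 0 := by
  rw [cVec, inner_add_right, inner_smul_right, inner_sum]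
  simp only [inner_vv_single]
  have : (4 : ℝ) * ((Real.sqrt 80)⁻¹ * (Umat i 0 : ℝ)) +
      ∑ j, (Real.sqrt 80)⁻¹ * (Umat i j : ℝ) =
      (Real.sqrt 80)⁻¹ * ((4 * Umat i 0 + ∑ j, Umat i j : ℤ) : ℝ) := by
    push_cast
    rw [← Finset.mul_sum]
    ring
  rw [this, Uc]
  simp

lemma orthoc1 (i : Fin 72) : (inner ℝ (vv i) c1Vec : ℝ) = 0 := by
  rw [c1Vec]
  simp only [inner_add_right, inner_vv_single]
  have : ∀ a b c d e f g h : ℤ,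
      (Real.sqrt 80)⁻¹ * (a:ℝ) + (Real.sqrt 80)⁻¹ * b + (Real.sqrt 80)⁻¹ * c +
      (Real.sqrt 80)⁻¹ * d + (Real.sqrt 80)⁻¹ * e + (Real.sqrt 80)⁻¹ * f +
      (Real.sqrt 80)⁻¹ * g + (Real.sqrt 80)⁻¹ * h =
      (Real.sqrt 80)⁻¹ * ((a+b+c+d+e+f+g+h : ℤ) : ℝ) := by
    intros; push_cast; ring
  rw [this, Uc1]
  simp

lemma orthoc2 (i : Fin 72) : (inner ℝ (vv i) c2Vec : ℝ) = 0 := by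
  rw [c2Vec]
  simp only [inner_add_right, inner_vv_single]
  have : ∀ a b c d e f g h : ℤ,
      (Real.sqrt 80)⁻¹ * (a:ℝ) + (Real.sqrt 80)⁻¹ * b + (Real.sqrt 80)⁻¹ * c +
      (Real.sqrt 80)⁻¹ * d + (Real.sqrt 80)⁻¹ * e + (Real.sqrt 80)⁻¹ * f +
      (Real.sqrt 80)⁻¹ * g + (Real.sqrt 80)⁻¹ * h =
      (Real.sqrt 80)⁻¹ * ((a+b+c+d+e+f+g+h : ℤ) : ℝ) := by
    intros; push_cast; ring
  rw [this, Uc2]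
  simp

noncomputable def Svecs : Fin 5 → EuclideanSpace ℝ (Fin 24) :=
  ![stdBasisR24 0 - stdBasisR24 1, stdBasisR24 0 - stdBasisR24 2, cVec, c1Vec, c2Vec]

def idx : Fin 5 → Fin 24 := ![0, 1, 2, 9, 5]

noncomputable def Tmap : EuclideanSpace ℝ (Fin 24) →ₗ[ℝ] (Fin 5 → ℝ) :=
  LinearMap.pi fun k => PiLp.projₗ (𝕜 := ℝ) (β := fun _ : Fin 24 => ℝ) 2 (idx k)

lemma Tmap_apply (v : EuclideanSpace ℝ (Fin 24)) (k : Fin 5) : Tmap v k = v (idx k) := rfl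

def MmatZ : Matrix (Fin 5) (Fin 5) ℤ :=
  !![1,-1,0,0,0; 1,0,-1,0,0; 5,1,1,1,1; 0,1,1,1,0; 0,1,1,0,1]

def Mmat : Matrix (Fin 5) (Fin 5) ℝ := MmatZ.map (Int.cast)

set_option maxRecDepth 4000 in
lemma detM : Mmat.det = 3 := by
  have h : Mmat = (Int.castRingHom ℝ).mapMatrix MmatZ := rfl
  rw [h, ← RingHom.map_det]
  norm_num [show MmatZ.det = 3 by decide]

lemma stdBasisR24_apply (a j : Fin 24) :
    stdBasisR24 a j = if j = a then 1 else 0 := by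
  rw [stdBasisR24, EuclideanSpace.single_apply]

lemma sum_basis_apply (j : Fin 24) : (∑ i, stdBasisR24 i) j = 1 := by
  have h := map_sum (PiLp.projₗ (𝕜 := ℝ) (β := fun _ : Fin 24 => ℝ) 2 j)
    stdBasisR24 Finset.univ
  simp only [PiLp.projₗ_apply] at h
  rw [h]
  simp [stdBasisR24_apply]

lemma Svecs_li : LinearIndependent ℝ Svecs := by
  have hM : IsUnit Mmat := by
    rw [Matrix.isUnit_iff_isUnit_det, detM]; norm_num
  have hrows : (Tmap ∘ Svecs) = fun k => Mmat k := by
    funext k l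
    rw [Function.comp_apply, Tmap_apply]
    fin_cases k <;> fin_cases l <;>
      simp [Svecs, idx, Mmat, MmatZ, cVec, c1Vec, c2Vec,
        stdBasisR24_apply, sum_basis_apply] <;> norm_num [Matrix.vecHead, Matrix.vecTail]
  have hli : LinearIndependent ℝ (Tmap ∘ Svecs) := by
    rw [hrows]
    exact Matrix.linearIndependent_rows_iff_isUnit.2 hM
  exact hli.of_comp Tmap

lemma mem_W (i : Fin 72) : vv i ∈ (Submodule.span ℝ (Set.range Svecs))ᗮ := by
  rw [Submodule.mem_orthogonal]
  intro u hu
  induction hu using Submodule.span_induction with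
  | mem x hx =>
      obtain ⟨k, rfl⟩ := hx
      rw [real_inner_comm]
      fin_cases k
      · exact ortho1 i
      · exact ortho2 i
      · exact orthoc i
      · exact orthoc1 i
      · exact orthoc2 i
  | zero => exact inner_zero_left _
  | add x y _ _ hx hy => rw [inner_add_left, hx, hy, add_zero]
  | smul a x _ hx => rw [real_inner_smul_left, hx, mul_zero]

end Equi72

/-- There exist 72 unit vectors in `ℝ^24`, pairwise equiangular with angle
`arccos (1/5)`, each orthogonal to `e₁ - e₂`, `e₁ - e₃`, `c`, `c₁` and `c₂`; in
particular they lie in a 19-dimensional subspace of `ℝ^24` and form 72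
equiangular lines in `ℝ^19`. -/
theorem equiangular_72_lines_in_R24 :
    ∃ v : Fin 72 → EuclideanSpace ℝ (Fin 24),
      (∀ i, ‖v i‖ = 1) ∧
      (∀ i j, i ≠ j → |(inner ℝ (v i) (v j) : ℝ)| = 1 / 5) ∧
      (∀ i, (inner ℝ (v i) (stdBasisR24 0 - stdBasisR24 1) : ℝ) = 0) ∧
      (∀ i, (inner ℝ (v i) (stdBasisR24 0 - stdBasisR24 2) : ℝ) = 0) ∧
      (∀ i, (inner ℝ (v i) cVec : ℝ) = 0) ∧
      (∀ i, (inner ℝ (v i) c1Vec : ℝ) = 0) ∧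
      (∀ i, (inner ℝ (v i) c2Vec : ℝ) = 0) ∧
      ∃ W : Submodule ℝ (EuclideanSpace ℝ (Fin 24)),
        Module.finrank ℝ W = 19 ∧ ∀ i, v i ∈ W := by
  refine ⟨Equi72.vv, Equi72.norm_vv, ?_, Equi72.ortho1, Equi72.ortho2,
    Equi72.orthoc, Equi72.orthoc1, Equi72.orthoc2,
    (Submodule.span ℝ (Set.range Equi72.Svecs))ᗮ, ?_, Equi72.mem_W⟩
  · intro i j hij
    rw [Equi72.inner_vv]
    rw [abs_eq (by norm_num : (0:ℝ) ≤ 1/5)]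
    rcases Equi72.dotZ_pm i j hij with h | h <;> rw [h]
    · left; norm_num
    · right; norm_num
  · have h2 := Submodule.finrank_add_finrank_orthogonal
      (𝕜 := ℝ) (Submodule.span ℝ (Set.range Equi72.Svecs))
    rw [finrank_span_eq_card Equi72.Svecs_li] at h2
    simp only [Fintype.card_fin, finrank_euclideanSpace] at h2
    omega
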